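/- Let x ∈ ℂ with |x| < 1, let (a_n)_{n≥0} be complex numbers such that Σ_{n=0}^∞ |a_n|·|x|^n < ∞, let (b_n)_{n≥0} be nonnegative reals with b_n → ∞, and let μ ≥ 0. Then r^{2(μ+1)} · Σ_{n=0}^∞ a_n·x^n / (b_n + r²)^{μ+1} → Σ_{n=0}^∞ a_n·x^n as r → ∞. -/

import Mathlib

open Filter Complex

/-- Proposition 6.2: asymptotics of Mathieu-type power series.  For `|x| < 1`,
absolutely convergent `∑ aₙ xⁿ` and `bₙ → ∞`,
`r^{2(μ+1)} ∑_{n=0}^∞ aₙ xⁿ / (bₙ + r²)^{μ+1} → ∑_{n=0}^∞ aₙ xⁿ` as `r → ∞`. -/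
theorem mathieu_power_series_asymptotics
    (x : ℂ) (hx : ‖x‖ < 1)
    (a : ℕ → ℂ)
    (ha : Summable (fun n : ℕ => ‖a n‖ * ‖x‖ ^ n))
    (b : ℕ → ℝ) (hb_nonneg : ∀ n, 0 ≤ b n)
    (hb : Filter.Tendsto b Filter.atTop Filter.atTop)
    (μ : ℝ) (hμ : 0 ≤ μ) :
    Filter.Tendsto
      (fun r : ℝ =>
        ((r ^ (2 * (μ + 1)) : ℝ) : ℂ) *
          ∑' n : ℕ, a n * x ^ n / (((b n + r ^ 2) ^ (μ + 1) : ℝ) : ℂ))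
      Filter.atTop (nhds (∑' n : ℕ, a n * x ^ n)) := by
  set f : ℝ → ℕ → ℂ := fun r n =>
    a n * x ^ n * (((r ^ 2 / (b n + r ^ 2)) ^ (μ + 1) : ℝ) : ℂ) with hf
  have key : Tendsto (fun r => ∑' n, f r n) atTop (nhds (∑' n : ℕ, a n * x ^ n)) := by
    apply tendsto_tsum_of_dominated_convergence ha
    · intro n
      have h1 : Tendsto (fun r : ℝ => r ^ 2 / (b n + r ^ 2)) atTop (nhds 1) := by
        have hd : Tendsto (fun r : ℝ => b n + r ^ 2) atTop atTop :=
          tendsto_atTop_add_const_left _ _ (tendsto_pow_atTop two_ne_zero)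
        have h0 : Tendsto (fun r : ℝ => b n / (b n + r ^ 2)) atTop (nhds 0) :=
          Tendsto.div_atTop tendsto_const_nhds hd
        have : Tendsto (fun r : ℝ => 1 - b n / (b n + r ^ 2)) atTop (nhds (1 - 0)) :=
          tendsto_const_nhds.sub h0
        rw [sub_zero] at this
        refine this.congr' ?_
        filter_upwards [hd.eventually_gt_atTop 0] with r hr
        field_simp
        ring
      have h2 : Tendsto (fun r : ℝ => (r ^ 2 / (b n + r ^ 2)) ^ (μ + 1)) atTop (nhds 1) := by
        have hc : ContinuousAt (fun y : ℝ => y ^ (μ + 1)) 1 :=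
          Real.continuousAt_rpow_const 1 (μ + 1) (Or.inl one_ne_zero)
        have := hc.tendsto.comp h1
        simpa [Real.one_rpow, Function.comp_def] using this
      have := (Complex.continuous_ofReal.tendsto 1).comp h2
      simpa using (tendsto_const_nhds.mul this : Tendsto (fun r => a n * x ^ n *
        (((r ^ 2 / (b n + r ^ 2)) ^ (μ + 1) : ℝ) : ℂ)) atTop (nhds (a n * x ^ n * ((1:ℝ):ℂ))))
    · filter_upwards [eventually_ge_atTop (0:ℝ)] with r hr n
      have hden : 0 ≤ b n + r ^ 2 := by have := hb_nonneg n; positivity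
      have hle : r ^ 2 / (b n + r ^ 2) ≤ 1 := by
        rcases eq_or_lt_of_le hden with h | h
        · simp [← h]
        · rw [div_le_one h]; linarith [hb_nonneg n]
      have hnn : 0 ≤ r ^ 2 / (b n + r ^ 2) := by positivity
      have hb1 : (r ^ 2 / (b n + r ^ 2)) ^ (μ + 1) ≤ 1 :=
        Real.rpow_le_one hnn hle (by linarith)
      have hb0 : 0 ≤ (r ^ 2 / (b n + r ^ 2)) ^ (μ + 1) := Real.rpow_nonneg hnn _
      calc ‖f r n‖ = ‖a n‖ * ‖x‖ ^ n *
            |(r ^ 2 / (b n + r ^ 2)) ^ (μ + 1)| := by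
            simp [hf, norm_mul, norm_pow, Complex.norm_real]
        _ ≤ ‖a n‖ * ‖x‖ ^ n * 1 := by
            gcongr
            rw [_root_.abs_of_nonneg hb0]; exact hb1
        _ = _ := mul_one _
  refine key.congr' ?_
  filter_upwards [eventually_gt_atTop (0:ℝ)] with r hr
  rw [← tsum_mul_left]
  congr 1 with n
  have hden : 0 < b n + r ^ 2 := by have := hb_nonneg n; positivity
  have hre : (r ^ 2 / (b n + r ^ 2)) ^ (μ + 1)
      = r ^ (2 * (μ + 1)) / (b n + r ^ 2) ^ (μ + 1) := by
    rw [Real.div_rpow (by positivity) hden.le]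
    congr 1
    rw [Real.rpow_mul hr.le, Real.rpow_two]
  rw [hf]
  simp only [hre]
  push_cast [Real.rpow_natCast]
  
  ring
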